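/- For every row-finite quiver E, the graph monoid M(E) is a conical refinement monoid. -/

import Mathlib

/-- The algebraic preorder on a commutative monoid: `x ≤ y` iff `∃ z, y = x + z`. -/
def AlgLE {M : Type*} [AddCommMonoid M] (x y : M) : Prop := ∃ z, y = x + z

/-- A monoid is conical if `x + y = 0` implies `x = 0` and `y = 0`. -/
def IsConical (M : Type*) [AddCommMonoid M] : Prop := ∀ x y : M, x + y = 0 → x = 0 ∧ y = 0

/-- A refinement monoid: every equality `a + b = c + d` admits a refinement. -/
def IsRefinement (M : Type*) [AddCommMonoid M] : Prop :=
  ∀ a b c d : M, a + b = c + d →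
    ∃ x y z w : M, a = x + y ∧ b = z + w ∧ c = x + z ∧ d = y + w

/-- Separative: `a + a = a + b` and `b + b = a + b` imply `a = b`. -/
def IsSeparative (M : Type*) [AddCommMonoid M] : Prop :=
  ∀ a b : M, a + a = a + b → b + b = a + b → a = b

/-- A prime element: `p ≠ 0` and `p ≤ a + b` implies `p ≤ a` or `p ≤ b`
(algebraic preorder). -/
def IsPrimeElem {M : Type*} [AddCommMonoid M] (p : M) : Prop :=
  p ≠ 0 ∧ ∀ a b : M, AlgLE p (a + b) → AlgLE p a ∨ AlgLE p b

/-- Primely generated: every element is a finite sum of prime elements. -/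
def PrimelyGenerated (M : Type*) [AddCommMonoid M] : Prop :=
  ∀ x : M, ∃ l : Multiset M, (∀ p ∈ l, IsPrimeElem p) ∧ x = l.sum

/-- Antisymmetric: the algebraic preorder is a partial order. -/
def IsAntisymmetric (M : Type*) [AddCommMonoid M] : Prop :=
  ∀ x y : M, AlgLE x y → AlgLE y x → x = y

/-- A primitive monoid: an antisymmetric, primely generated refinement monoid. -/
def IsPrimitive (M : Type*) [AddCommMonoid M] : Prop :=
  IsAntisymmetric M ∧ PrimelyGenerated M ∧ IsRefinement M

/-- A row-finite quiver: vertex set `V`, edge set `E`, source and range maps,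
with each vertex emitting only finitely many edges. -/
structure RowFiniteQuiver where
  V : Type
  E : Type
  s : E → V
  r : E → V
  rowFinite : ∀ v : V, {e : E | s e = v}.Finite

/-- The defining relations of the graph monoid: each vertex `v` emitting at least
one edge is identified with `Σ_{s(e) = v} r(e)`.  (The free commutative monoid on
`V` is the monoid `Multiset V`.) -/
def graphRel (Q : RowFiniteQuiver) : Multiset Q.V → Multiset Q.V → Prop :=
  fun x y => ∃ v : Q.V, (∃ e : Q.E, Q.s e = v) ∧ x = {v} ∧
    y = (Q.rowFinite v).toFinset.val.map Q.r

/-- The graph monoid `M(E)`: quotient of the free commutative monoid on the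
vertices by the smallest monoid congruence containing the graph relations. -/
abbrev GraphMonoid (Q : RowFiniteQuiver) := (addConGen (graphRel Q)).Quotient

section Aux

open Relation

variable {Q : RowFiniteQuiver}

/-- edges out of `v`, ranges. -/
noncomputable def RSum (Q : RowFiniteQuiver) (v : Q.V) : Multiset Q.V :=
  (Q.rowFinite v).toFinset.val.map Q.r

/-- one rewriting step -/
def Step (Q : RowFiniteQuiver) (x y : Multiset Q.V) : Prop :=
  ∃ v z, (∃ e : Q.E, Q.s e = v) ∧ x = {v} + z ∧ y = RSum Q v + z

lemma Step.add_right {x y : Multiset Q.V} (h : Step Q x y) (w : Multiset Q.V) :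
    Step Q (x + w) (y + w) := by
  obtain ⟨v, z, he, hx, hy⟩ := h
  exact ⟨v, z + w, he, by rw [hx, add_assoc], by rw [hy, add_assoc]⟩

lemma rt_add {a b c d : Multiset Q.V} (h1 : ReflTransGen (Step Q) a b)
    (h2 : ReflTransGen (Step Q) c d) : ReflTransGen (Step Q) (a + c) (b + d) := by
  have h1' : ReflTransGen (Step Q) (a + c) (b + c) := by
    induction h1 with
    | refl => exact .refl
    | tail _ h ih => exact ih.tail (h.add_right c)
  have h2' : ReflTransGen (Step Q) (b + c) (b + d) := by
    induction h2 with
    | refl => exact .refl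
    | tail _ h ih => exact ih.tail (by simpa [add_comm] using h.add_right b)
  exact h1'.trans h2'

lemma diamond : ∀ a b c, Step Q a b → Step Q a c →
    ∃ d, ReflGen (Step Q) b d ∧ ReflTransGen (Step Q) c d := by
  classical
  rintro a b c ⟨v, p, hv, hav, hb⟩ ⟨w, q, hw, haw, hc⟩
  by_cases hvw : v = w
  · subst hvw
    have hpq : p = q := by
      have := hav.symm.trans haw
      exact add_left_cancel this
    subst hpq
    exact ⟨b, .refl, by rw [hb, hc]⟩
  · -- v ≠ w : p contains w, q contains v
    have hwmem : w ∈ p := by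
      have : w ∈ ({v} : Multiset Q.V) + p := by
        rw [hav.symm.trans haw]; simp [Multiset.mem_add]
      rcases Multiset.mem_add.1 this with h | h
      · simp at h; exact absurd h.symm hvw
      · exact h
    set u := p.erase w with hu
    have hp : p = {w} + u := by
      rw [Multiset.singleton_add, hu, Multiset.cons_erase hwmem]
    have hq : q = {v} + u := by
      have : ({w} : Multiset Q.V) + ({v} + u) = {w} + q := by
        rw [← haw, hav, hp]; abel
      exact (add_left_cancel this).symm
    refine ⟨RSum Q v + RSum Q w + u, .single ?_, .single ?_⟩
    · exact ⟨w, RSum Q v + u, hw, by rw [hb, hp]; abel, by abel⟩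
    · exact ⟨v, RSum Q w + u, hv, by rw [hc, hq]; abel, by abel⟩

/-- the candidate congruence -/
noncomputable def gcon (Q : RowFiniteQuiver) : AddCon (Multiset Q.V) where
  r := Join (ReflTransGen (Step Q))
  iseqv := equivalence_join_reflTransGen diamond
  add' := by
    rintro a b c d ⟨e, hae, hbe⟩ ⟨f, hcf, hdf⟩
    exact ⟨e + f, rt_add hae hcf, rt_add hbe hdf⟩

lemma gen_eq (Q : RowFiniteQuiver) : addConGen (graphRel Q) = gcon Q := by
  refine le_antisymm (AddCon.addConGen_le.2 ?_) ?_
  · rintro x y ⟨v, hv, hx, hy⟩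
    exact ⟨y, .single ⟨v, 0, hv, by simp [hx], by simp [hy, RSum]⟩, .refl⟩
  · rintro x y ⟨c, hxc, hyc⟩
    have key : ∀ {a b : Multiset Q.V}, ReflTransGen (Step Q) a b →
        (addConGen (graphRel Q)) a b := by
      intro a b h
      induction h with
      | refl => exact (addConGen (graphRel Q)).refl _
      | tail _ h ih =>
        obtain ⟨v, z, hv, h1, h2⟩ := h
        refine (addConGen (graphRel Q)).trans ih ?_
        rw [h1, h2]
        exact (addConGen (graphRel Q)).add
          (AddConGen.Rel.of _ _ (show graphRel Q {v} (RSum Q v) from ⟨v, hv, rfl, rfl⟩)) ((addConGen (graphRel Q)).refl z)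
    exact (addConGen (graphRel Q)).trans (key hxc) ((addConGen (graphRel Q)).symm (key hyc))

lemma rsum_ne_zero {v : Q.V} (hv : ∃ e : Q.E, Q.s e = v) : RSum Q v ≠ 0 := by
  obtain ⟨e, he⟩ := hv
  have hm : Q.r e ∈ RSum Q v :=
    Multiset.mem_map_of_mem _ (by rw [Finset.mem_val]; exact (Set.Finite.mem_toFinset _).2 he)
  intro h; rw [h] at hm; simp at hm

lemma step_ne_zero {x y : Multiset Q.V} (h : Step Q x y) : y ≠ 0 := by
  obtain ⟨v, z, hv, _, hy⟩ := h
  intro h0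
  rw [hy] at h0
  exact rsum_ne_zero hv (add_eq_zero.1 h0).1

lemma rt_from_zero {b : Multiset Q.V} (h : ReflTransGen (Step Q) 0 b) : b = 0 := by
  induction h with
  | refl => rfl
  | tail _ h ih =>
    subst ih
    obtain ⟨v, z, _, h1, _⟩ := h
    exact absurd h1.symm (by simp)

lemma rt_to_zero {a b : Multiset Q.V} (h : ReflTransGen (Step Q) a b) (hb : b = 0) : a = 0 := by
  induction h with
  | refl => exact hb
  | tail _ h _ => exact absurd hb (step_ne_zero h)

/-- splitting of reductions over sums -/
lemma rt_split {a b e : Multiset Q.V} (h : ReflTransGen (Step Q) (a + b) e) :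
    ∃ a' b', ReflTransGen (Step Q) a a' ∧ ReflTransGen (Step Q) b b' ∧ e = a' + b' := by
  classical
  generalize hab : a + b = s at h
  induction h with
  | refl => exact ⟨a, b, .refl, .refl, hab.symm⟩
  | tail _ h ih =>
    obtain ⟨a', b', ha, hb, rfl⟩ := ih
    obtain ⟨v, z, hv, h1, h2⟩ := h
    have hvmem : v ∈ a' + b' := by rw [h1]; simp
    rcases Multiset.mem_add.1 hvmem with hm | hm
    · obtain ⟨u, hu⟩ : ∃ u, a' = {v} + u :=
        ⟨a'.erase v, by rw [Multiset.singleton_add, Multiset.cons_erase hm]⟩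
      have hz : z = u + b' := by
        have : ({v} : Multiset Q.V) + z = {v} + (u + b') := by
          rw [← h1, hu]; abel
        exact add_left_cancel this
      exact ⟨RSum Q v + u, b', ha.tail ⟨v, u, hv, hu, rfl⟩, hb, by rw [h2, hz]; abel⟩
    · obtain ⟨u, hu⟩ : ∃ u, b' = {v} + u :=
        ⟨b'.erase v, by rw [Multiset.singleton_add, Multiset.cons_erase hm]⟩
      have hz : z = a' + u := by
        have : ({v} : Multiset Q.V) + z = {v} + (a' + u) := by
          rw [← h1, hu]; abel
        exact add_left_cancel this
      exact ⟨a', RSum Q v + u, ha, hb.tail ⟨v, u, hv, hu, rfl⟩, by rw [h2, hz]; abel⟩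

lemma multiset_refinement {α : Type*} (a b c d : Multiset α) (h : a + b = c + d) :
    ∃ x y z w : Multiset α, a = x + y ∧ b = z + w ∧ c = x + z ∧ d = y + w := by
  classical
  refine ⟨a ∩ c, a - c, c - a, b - (c - a), ?_, ?_, ?_, ?_⟩ <;>
    · ext v
      have := congrArg (Multiset.count v) h
      simp only [Multiset.count_add, Multiset.count_sub, Multiset.count_inter] at *
      omega

end Aux

theorem statement4 (Q : RowFiniteQuiver) :
    IsConical (GraphMonoid Q) ∧ IsRefinement (GraphMonoid Q) := by
  constructor
  · intro x y
    refine AddCon.induction_on₂ x y ?_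
    intro m n h
    have h' : (addConGen (graphRel Q)) (m + n) 0 := by
      rw [← AddCon.eq]
      simpa using h
    rw [gen_eq] at h'
    obtain ⟨e, h1, h2⟩ := h'
    have he : e = 0 := rt_from_zero h2
    have hmn : m + n = 0 := rt_to_zero h1 he
    rw [add_eq_zero] at hmn
    constructor
    · show ((m : (addConGen (graphRel Q)).Quotient)) = 0
      rw [hmn.1]; rfl
    · show ((n : (addConGen (graphRel Q)).Quotient)) = 0
      rw [hmn.2]; rfl
  · intro a b c d
    refine AddCon.induction_on₂ a b fun m n => ?_
    refine AddCon.induction_on₂ c d fun p q => ?_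
    intro h
    have h' : (addConGen (graphRel Q)) (m + n) (p + q) := by
      rw [← AddCon.eq]; exact h
    rw [gen_eq] at h'
    obtain ⟨e, h1, h2⟩ := h'
    obtain ⟨m', n', hm, hn, rfl⟩ := rt_split h1
    obtain ⟨p', q', hp, hq, heq⟩ := rt_split h2
    obtain ⟨x, y, z, w, hx, hy, hz, hw⟩ := multiset_refinement m' n' p' q' heq
    have cm : (m : GraphMonoid Q) = (m' : Multiset Q.V) := by
      rw [AddCon.eq, gen_eq]; exact ⟨m', hm, .refl⟩
    have cn : (n : GraphMonoid Q) = (n' : Multiset Q.V) := by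
      rw [AddCon.eq, gen_eq]; exact ⟨n', hn, .refl⟩
    have cp : (p : GraphMonoid Q) = (p' : Multiset Q.V) := by
      rw [AddCon.eq, gen_eq]; exact ⟨p', hp, .refl⟩
    have cq : (q : GraphMonoid Q) = (q' : Multiset Q.V) := by
      rw [AddCon.eq, gen_eq]; exact ⟨q', hq, .refl⟩
    refine ⟨(x : Multiset Q.V), y, z, w, ?_, ?_, ?_, ?_⟩
    · rw [cm, hx]; rfl
    · rw [cn, hy]; rfl
    · rw [cp, hz]; rfl
    · rw [cq, hw]; rfl
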